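/- Let C be a totally traceless generalized curvature tensor on Minkowski space ℝ^4 and let u be a unit timelike vector such that C is Weyl compatible with u. Then C is wholly determined by its electric part E: for all vectors x, y, z, w, C(x,y,z,w) = 2·[η(u,x)η(u,w)E(y,z) − η(u,x)η(u,z)E(y,w) + η(u,y)η(u,z)E(x,w) − η(u,y)η(u,w)E(x,z)] + η(x,w)E(y,z) − η(x,z)E(y,w) + η(y,z)E(x,w) − η(y,w)E(x,z). -/
import Mathlib


open Finset

noncomputable section

/-- A 4-argument real tensor on `ℝ^n`. -/
abbrev Tensor4 (n : ℕ) :=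
  (Fin n → ℝ) → (Fin n → ℝ) → (Fin n → ℝ) → (Fin n → ℝ) → ℝ

/-- Components of the Minkowski metric `diag(-1,1,…,1)` of signature `(-,+,…,+)`.
Since this matrix is its own inverse, it also gives the components `η^{ab}`
of the inverse metric. -/
def ηm {n : ℕ} (a b : Fin n) : ℝ :=
  if a = b then (if (a : ℕ) = 0 then -1 else 1) else 0

/-- The Minkowski bilinear form `η` of signature `(-,+,…,+)` on `ℝ^n`. -/
def ηf {n : ℕ} (x y : Fin n → ℝ) : ℝ :=
  ∑ i : Fin n, (if (i : ℕ) = 0 then (-1 : ℝ) else 1) * x i * y i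

/-- The standard basis `(e_a)` of `ℝ^n`. -/
def stdb {n : ℕ} (a : Fin n) : Fin n → ℝ := fun i => if i = a then 1 else 0

/-- Multilinearity of a 4-argument map. -/
def Multilinear4 {n : ℕ} (C : Tensor4 n) : Prop :=
  (∀ y z w, IsLinearMap ℝ fun x => C x y z w) ∧
  (∀ x z w, IsLinearMap ℝ fun y => C x y z w) ∧
  (∀ x y w, IsLinearMap ℝ fun z => C x y z w) ∧
  (∀ x y z, IsLinearMap ℝ fun w => C x y z w)

/-- Bilinearity of a 2-argument map. -/
def Bilinear2 {n : ℕ} (S : (Fin n → ℝ) → (Fin n → ℝ) → ℝ) : Prop :=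
  (∀ y, IsLinearMap ℝ fun x => S x y) ∧ (∀ x, IsLinearMap ℝ fun y => S x y)

/-- A generalized curvature tensor: a multilinear map with the algebraic
symmetries of the Riemann tensor (antisymmetry in the first and the last pair,
pair-exchange symmetry, and the first Bianchi identity). -/
def IsGenCurv {n : ℕ} (C : Tensor4 n) : Prop :=
  Multilinear4 C ∧
  (∀ x y z w, C x y z w = - C y x z w) ∧
  (∀ x y z w, C x y z w = - C x y w z) ∧
  (∀ x y z w, C x y z w = C z w x y) ∧
  (∀ x y z w, C x y z w + C y z x w + C z x y w = 0)

/-- Total tracelessness: `Σ_{a,b} η^{ab} C(e_a, x, e_b, y) = 0`. -/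
def TotallyTraceless {n : ℕ} (C : Tensor4 n) : Prop :=
  ∀ x y, (∑ a, ∑ b, ηm a b * C (stdb a) x (stdb b) y) = 0

/-- Weyl compatibility of `C` with the vector `u`. -/
def WeylCompatible {n : ℕ} (C : Tensor4 n) (u : Fin n → ℝ) : Prop :=
  ∀ x y z w,
    ηf u x * C y z w u + ηf u y * C z x w u + ηf u z * C x y w u = 0

/-- The electric part of `C` relative to `u`: `E(x,y) = C(u,x,y,u)`. -/
def electric {n : ℕ} (C : Tensor4 n) (u : Fin n → ℝ)
    (x y : Fin n → ℝ) : ℝ :=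
  C u x y u

/-- Full η-self-contraction `T² = Σ T_{abcd} T^{abcd}` of a 4-tensor. -/
def sq4 {n : ℕ} (T : Tensor4 n) : ℝ :=
  ∑ a, ∑ a', ∑ b, ∑ b', ∑ c, ∑ c', ∑ d, ∑ d',
    ηm a a' * ηm b b' * ηm c c' * ηm d d' *
      T (stdb a) (stdb b) (stdb c) (stdb d) *
      T (stdb a') (stdb b') (stdb c') (stdb d')

/-- Full η-self-contraction `S² = Σ S_{ab} S^{ab}` of a 2-tensor. -/
def sq2 {n : ℕ} (S : (Fin n → ℝ) → (Fin n → ℝ) → ℝ) : ℝ :=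
  ∑ a, ∑ a', ∑ b, ∑ b',
    ηm a a' * ηm b b' * S (stdb a) (stdb b) * S (stdb a') (stdb b')

/-- The tensor `Γ` associated with `C`, its electric part `E`, `u` and `η`. -/
def Γt {n : ℕ} (C : Tensor4 n) (u : Fin n → ℝ) : Tensor4 n :=
  fun x y z w =>
    C x y z w
      - ((n : ℝ) - 2) / ((n : ℝ) - 3) *
          (ηf u x * ηf u w * electric C u y z - ηf u y * ηf u w * electric C u x z
            - ηf u x * ηf u z * electric C u y w + ηf u y * ηf u z * electric C u x w)
      - 1 / ((n : ℝ) - 3) *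
          (ηf x w * electric C u y z - ηf y w * electric C u x z
            - ηf x z * electric C u y w + ηf y z * electric C u x w)

/- ===== auxiliary development ===== -/

def eps (i : Fin 4) : ℝ := if (i : ℕ) = 0 then -1 else 1

lemma eps_sq (i : Fin 4) : eps i * eps i = 1 := by
  unfold eps; split <;> norm_num

lemma etaf_eps (x y : Fin 4 → ℝ) : ηf x y = ∑ i : Fin 4, eps i * x i * y i := rfl

lemma etaf_ex (x y : Fin 4 → ℝ) :
    ηf x y = -(x 0 * y 0) + x 1 * y 1 + x 2 * y 2 + x 3 * y 3 := by
  rw [etaf_eps, Fin.sum_univ_four]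
  norm_num [eps, show ((1:Fin 4):ℕ)=1 from rfl, show ((2:Fin 4):ℕ)=2 from rfl,
    show ((3:Fin 4):ℕ)=3 from rfl]

lemma etaf_symm (x y : Fin 4 → ℝ) : ηf x y = ηf y x := by
  rw [etaf_ex, etaf_ex]; ring

lemma etaf_lin (v : Fin 4 → ℝ) : IsLinearMap ℝ (fun w => ηf v w) := by
  constructor
  · intro a b; simp only [etaf_ex, Pi.add_apply]; ring
  · intro c a; simp only [etaf_ex, Pi.smul_apply, smul_eq_mul]; ring

lemma etaf_lin' (v : Fin 4 → ℝ) : IsLinearMap ℝ (fun w => ηf w v) := by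
  constructor
  · intro a b; simp only [etaf_ex, Pi.add_apply]; ring
  · intro c a; simp only [etaf_ex, Pi.smul_apply, smul_eq_mul]; ring

lemma lin_mul_const (v : Fin 4 → ℝ) (k : ℝ) :
    IsLinearMap ℝ (fun w => ηf v w * k) := by
  constructor
  · intro a b; simp only [etaf_ex, Pi.add_apply]; ring
  · intro c a; simp only [etaf_ex, Pi.smul_apply, smul_eq_mul]; ring

lemma etaf_stdb (v : Fin 4 → ℝ) (a : Fin 4) : ηf v (stdb a) = eps a * v a := by
  fin_cases a <;> simp [etaf_ex, stdb, eps]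

lemma vec_ex (v : Fin 4 → ℝ) : ∑ a : Fin 4, v a • stdb a = v := by
  funext i
  rw [Fin.sum_univ_four]
  fin_cases i <;> simp [stdb]

lemma raise {F : (Fin 4 → ℝ) → ℝ} (hF : IsLinearMap ℝ F) (v : Fin 4 → ℝ) :
    ∑ a : Fin 4, eps a * ηf v (stdb a) * F (stdb a) = F v := by
  have h1 : ∀ a : Fin 4, eps a * ηf v (stdb a) = v a := by
    intro a; rw [etaf_stdb, ← mul_assoc, eps_sq, one_mul]
  calc ∑ a : Fin 4, eps a * ηf v (stdb a) * F (stdb a)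
      = ∑ a : Fin 4, v a * F (stdb a) := by
        refine Finset.sum_congr rfl fun a _ => ?_; rw [h1]
    _ = F v := by
        conv_rhs => rw [← vec_ex v]
        have hs := map_sum (IsLinearMap.mk' F hF) (fun a => v a • stdb a) Finset.univ
        simp only [IsLinearMap.mk'_apply] at hs
        rw [hs]
        refine Finset.sum_congr rfl fun a _ => ?_
        rw [hF.map_smul]; simp

/- ===== projection and adapted metric ===== -/

def Pj (u v : Fin 4 → ℝ) : Fin 4 → ℝ := fun i => v i + ηf u v * u i

def hm (u x y : Fin 4 → ℝ) : ℝ := ηf x y + ηf u x * ηf u y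

lemma Pj_eq (u v : Fin 4 → ℝ) : Pj u v = v + ηf u v • u := by
  funext i
  simp only [Pj, Pi.add_apply, Pi.smul_apply, smul_eq_mul]

lemma etaf_Pj_right (s u v : Fin 4 → ℝ) : ηf s (Pj u v) = ηf s v + ηf u v * ηf s u := by
  simp only [Pj, etaf_ex]; ring

lemma etaf_u_Pj (u v : Fin 4 → ℝ) (hu : ηf u u = -1) : ηf u (Pj u v) = 0 := by
  rw [etaf_Pj_right, hu]; ring

lemma etaf_Pj_left (s u v : Fin 4 → ℝ) : ηf (Pj u v) s = ηf v s + ηf u v * ηf u s := by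
  rw [etaf_symm, etaf_Pj_right, etaf_symm s v, etaf_symm s u]

lemma Pj_idem (u v : Fin 4 → ℝ) (hu : ηf u u = -1) : Pj u (Pj u v) = Pj u v := by
  funext i
  show (Pj u v) i + ηf u (Pj u v) * u i = (Pj u v) i
  rw [etaf_u_Pj u v hu]; ring

lemma hm_symm (u x y : Fin 4 → ℝ) : hm u x y = hm u y x := by
  unfold hm; rw [etaf_symm x y]; ring

lemma hm_stdb (u y : Fin 4 → ℝ) (a : Fin 4) : hm u (stdb a) y = ηf (Pj u y) (stdb a) := by
  unfold hm; rw [etaf_Pj_left, etaf_symm (stdb a) y]; ring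

lemma hm_PjPj (u x y : Fin 4 → ℝ) (hu : ηf u u = -1) :
    ηf (Pj u x) (Pj u y) = hm u x y := by
  rw [etaf_Pj_right, etaf_symm (Pj u x) y, etaf_Pj_right, etaf_symm (Pj u x) u,
    etaf_u_Pj u x hu]
  unfold hm; rw [etaf_symm y x, etaf_symm y u]; ring

lemma hm_Pj_left (u x y : Fin 4 → ℝ) (hu : ηf u u = -1) :
    hm u (Pj u x) y = hm u x y := by
  unfold hm
  rw [etaf_Pj_left, etaf_u_Pj u x hu]
  ring

lemma hm_Pj_right (u x y : Fin 4 → ℝ) (hu : ηf u u = -1) :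
    hm u x (Pj u y) = hm u x y := by
  rw [hm_symm, hm_Pj_left u y x hu, hm_symm]

section withC

variable {C : Tensor4 4} {u : Fin 4 → ℝ}

/- C slot helpers -/
lemma Cadd1 (hC : IsGenCurv C) (v v' y z w : Fin 4 → ℝ) :
    C (v + v') y z w = C v y z w + C v' y z w := (hC.1.1 y z w).map_add v v'

lemma Csmul1 (hC : IsGenCurv C) (c : ℝ) (v y z w : Fin 4 → ℝ) :
    C (c • v) y z w = c * C v y z w := by
  have := (hC.1.1 y z w).map_smul c v; simpa using this

lemma Cadd2 (hC : IsGenCurv C) (x v v' z w : Fin 4 → ℝ) :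
    C x (v + v') z w = C x v z w + C x v' z w := (hC.1.2.1 x z w).map_add v v'

lemma Csmul2 (hC : IsGenCurv C) (c : ℝ) (x v z w : Fin 4 → ℝ) :
    C x (c • v) z w = c * C x v z w := by
  have := (hC.1.2.1 x z w).map_smul c v; simpa using this

lemma Cadd3 (hC : IsGenCurv C) (x y v v' w : Fin 4 → ℝ) :
    C x y (v + v') w = C x y v w + C x y v' w := (hC.1.2.2.1 x y w).map_add v v'

lemma Csmul3 (hC : IsGenCurv C) (c : ℝ) (x y v w : Fin 4 → ℝ) :
    C x y (c • v) w = c * C x y v w := by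
  have := (hC.1.2.2.1 x y w).map_smul c v; simpa using this

lemma Cadd4 (hC : IsGenCurv C) (x y z v v' : Fin 4 → ℝ) :
    C x y z (v + v') = C x y z v + C x y z v' := (hC.1.2.2.2 x y z).map_add v v'

lemma Csmul4 (hC : IsGenCurv C) (c : ℝ) (x y z v : Fin 4 → ℝ) :
    C x y z (c • v) = c * C x y z v := by
  have := (hC.1.2.2.2 x y z).map_smul c v; simpa using this

/- electric part -/
lemma E_symm (hC : IsGenCurv C) (x y : Fin 4 → ℝ) :
    electric C u x y = electric C u y x := by
  have h1 := hC.2.2.2.1 u x y u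
  have h2 := hC.2.1 y u u x
  have h3 := hC.2.2.1 u y u x
  unfold electric; linarith

lemma E_u_left (hC : IsGenCurv C) (y : Fin 4 → ℝ) : electric C u u y = 0 := by
  have := hC.2.1 u u y u; unfold electric; linarith

lemma E_u_right (hC : IsGenCurv C) (x : Fin 4 → ℝ) : electric C u x u = 0 := by
  have := hC.2.2.1 u x u u; unfold electric; linarith

lemma E_lin_left (hC : IsGenCurv C) (y : Fin 4 → ℝ) :
    IsLinearMap ℝ (fun x => electric C u x y) := hC.1.2.1 u y u

lemma E_lin_right (hC : IsGenCurv C) (x : Fin 4 → ℝ) :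
    IsLinearMap ℝ (fun y => electric C u x y) := hC.1.2.2.1 u x u

lemma E_Pj_left (hC : IsGenCurv C) (x y : Fin 4 → ℝ) :
    electric C u (Pj u x) y = electric C u x y := by
  unfold electric
  rw [Pj_eq, Cadd2 hC, Csmul2 hC]
  have h0 : C u u y u = 0 := E_u_left hC y
  rw [h0]; ring

lemma E_Pj_right (hC : IsGenCurv C) (x y : Fin 4 → ℝ) :
    electric C u x (Pj u y) = electric C u x y := by
  unfold electric
  rw [Pj_eq, Cadd3 hC, Csmul3 hC]
  have h0 : C u x u u = 0 := E_u_right hC x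
  rw [h0]; ring

/- Lemma A : Weyl compatibility pins down `C (·,·,·,u)` -/
lemma lemA (hC : IsGenCurv C) (hu : ηf u u = -1) (hW : WeylCompatible C u)
    (x y w : Fin 4 → ℝ) :
    C x y w u = ηf u y * electric C u x w - ηf u x * electric C u y w := by
  have h1 := hW x y u w
  rw [hu] at h1
  have h2 := hC.2.1 y u w u
  unfold electric
  linear_combination (-1 : ℝ) * h1 + ηf u x * h2

/- traces -/
lemma tr0 (htr : TotallyTraceless C) (x y : Fin 4 → ℝ) :
    ∑ a : Fin 4, eps a * C (stdb a) x (stdb a) y = 0 := by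
  have h := htr x y
  have step : ∀ a : Fin 4, ∑ b : Fin 4, ηm a b * C (stdb a) x (stdb b) y
      = eps a * C (stdb a) x (stdb a) y := by
    intro a
    rw [Finset.sum_eq_single a]
    · simp [ηm, eps]
    · intro b _ hb
      have : ¬ (a = b) := fun e => hb e.symm
      simp [ηm, this]
    · intro ha; exact absurd (Finset.mem_univ a) ha
  calc ∑ a : Fin 4, eps a * C (stdb a) x (stdb a) y
      = ∑ a : Fin 4, ∑ b : Fin 4, ηm a b * C (stdb a) x (stdb b) y :=
        Finset.sum_congr rfl fun a _ => (step a).symm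
    _ = 0 := h

end withC

section withC2

variable {C : Tensor4 4} {u : Fin 4 → ℝ}

/- spatial Ricci contraction of C -/
lemma ricC (hC : IsGenCurv C) (htr : TotallyTraceless C) (hu : ηf u u = -1)
    (x y : Fin 4 → ℝ) :
    ∑ a : Fin 4, eps a * C (Pj u (stdb a)) x (Pj u (stdb a)) y
      = - electric C u x y := by
  have step : ∀ a : Fin 4, eps a * C (Pj u (stdb a)) x (Pj u (stdb a)) y
      = eps a * C (stdb a) x (stdb a) y
        + (eps a * ηf u (stdb a) * C u x (stdb a) y
        + (eps a * ηf u (stdb a) * C (stdb a) x u y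
        + eps a * ηf u (stdb a) * (ηf u (stdb a) * C u x u y))) := by
    intro a
    rw [Pj_eq, Cadd1 hC, Csmul1 hC, Cadd3 hC, Cadd3 hC, Csmul3 hC, Csmul3 hC]
    ring
  rw [Finset.sum_congr rfl fun a _ => step a, Finset.sum_add_distrib,
    Finset.sum_add_distrib, Finset.sum_add_distrib]
  rw [tr0 htr x y]
  rw [raise (hC.1.2.2.1 u x y) u]
  rw [raise (hC.1.1 x u y) u]
  rw [raise (lin_mul_const u (C u x u y)) u, hu]
  have h2 := hC.2.2.1 u x u y
  unfold electric
  linarith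

lemma trE (hC : IsGenCurv C) (htr : TotallyTraceless C) :
    ∑ a : Fin 4, eps a * electric C u (stdb a) (stdb a) = 0 := by
  have step : ∀ a : Fin 4, eps a * electric C u (stdb a) (stdb a)
      = - (eps a * C (stdb a) u (stdb a) u) := by
    intro a
    have := hC.2.1 u (stdb a) (stdb a) u
    unfold electric; rw [this]; ring
  rw [Finset.sum_congr rfl fun a _ => step a, Finset.sum_neg_distrib, tr0 htr u u,
    neg_zero]

lemma trhm (hu : ηf u u = -1) :
    ∑ a : Fin 4, eps a * hm u (stdb a) (stdb a) = 3 := by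
  have step : ∀ a : Fin 4, eps a * hm u (stdb a) (stdb a)
      = 1 + eps a * ηf u (stdb a) * ηf u (stdb a) := by
    intro a
    unfold hm
    rw [etaf_stdb (stdb a) a]
    have hsa : stdb a a = (1:ℝ) := by simp [stdb]
    rw [hsa]
    have := eps_sq a
    ring_nf
    nlinarith [eps_sq a]
  rw [Finset.sum_congr rfl fun a _ => step a, Finset.sum_add_distrib,
    raise (etaf_lin u) u, hu]
  norm_num

end withC2

/- more linearity helpers -/
lemma etaf_add_right (v a b : Fin 4 → ℝ) : ηf v (a + b) = ηf v a + ηf v b := by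
  simp only [etaf_ex, Pi.add_apply]; ring

lemma etaf_add_left (v a b : Fin 4 → ℝ) : ηf (a + b) v = ηf a v + ηf b v := by
  simp only [etaf_ex, Pi.add_apply]; ring

lemma etaf_smul_right (v : Fin 4 → ℝ) (c : ℝ) (a : Fin 4 → ℝ) :
    ηf v (c • a) = c * ηf v a := by
  simp only [etaf_ex, Pi.smul_apply, smul_eq_mul]; ring

lemma etaf_smul_left (v : Fin 4 → ℝ) (c : ℝ) (a : Fin 4 → ℝ) :
    ηf (c • a) v = c * ηf a v := by
  simp only [etaf_ex, Pi.smul_apply, smul_eq_mul]; ring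

lemma Pj_add (u a b : Fin 4 → ℝ) : Pj u (a + b) = Pj u a + Pj u b := by
  funext i
  simp only [Pj, Pi.add_apply, etaf_add_right]; ring

lemma Pj_smul (u : Fin 4 → ℝ) (c : ℝ) (a : Fin 4 → ℝ) :
    Pj u (c • a) = c • Pj u a := by
  funext i
  simp only [Pj, Pi.smul_apply, smul_eq_mul, etaf_smul_right]; ring

lemma hm_add_left (u a b y : Fin 4 → ℝ) : hm u (a + b) y = hm u a y + hm u b y := by
  unfold hm; rw [etaf_add_left, etaf_add_right]; ring

lemma hm_smul_left (u : Fin 4 → ℝ) (c : ℝ) (a y : Fin 4 → ℝ) :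
    hm u (c • a) y = c * hm u a y := by
  unfold hm; rw [etaf_smul_left, etaf_smul_right]; ring

lemma hm_add_right (u y a b : Fin 4 → ℝ) : hm u y (a + b) = hm u y a + hm u y b := by
  rw [hm_symm, hm_add_left, hm_symm u a y, hm_symm u b y]

lemma hm_smul_right (u : Fin 4 → ℝ) (c : ℝ) (y a : Fin 4 → ℝ) :
    hm u y (c • a) = c * hm u y a := by
  rw [hm_symm, hm_smul_left, hm_symm u a y]

section withC3

variable {C : Tensor4 4} {u : Fin 4 → ℝ}

lemma Eadd1 (hC : IsGenCurv C) (a b y : Fin 4 → ℝ) :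
    electric C u (a + b) y = electric C u a y + electric C u b y :=
  (E_lin_left hC y).map_add a b

lemma Esmul1 (hC : IsGenCurv C) (c : ℝ) (a y : Fin 4 → ℝ) :
    electric C u (c • a) y = c * electric C u a y := by
  have := (E_lin_left (u := u) hC y).map_smul c a; simpa using this

lemma Eadd2 (hC : IsGenCurv C) (x a b : Fin 4 → ℝ) :
    electric C u x (a + b) = electric C u x a + electric C u x b :=
  (E_lin_right hC x).map_add a b

lemma Esmul2 (hC : IsGenCurv C) (c : ℝ) (x a : Fin 4 → ℝ) :
    electric C u x (c • a) = c * electric C u x a := by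
  have := (E_lin_right (u := u) hC x).map_smul c a; simpa using this

end withC3

/- the difference tensor N -/
def Gt (C : Tensor4 4) (u : Fin 4 → ℝ) : Tensor4 4 := fun x y z w =>
  hm u x w * electric C u y z - hm u x z * electric C u y w
    + hm u y z * electric C u x w - hm u y w * electric C u x z

def Nt (C : Tensor4 4) (u : Fin 4 → ℝ) : Tensor4 4 := fun x y z w =>
  C (Pj u x) (Pj u y) (Pj u z) (Pj u w) - Gt C u x y z w

section withC4

variable {C : Tensor4 4} {u : Fin 4 → ℝ}

lemma Nt_a1 (hC : IsGenCurv C) (x y z w : Fin 4 → ℝ) :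
    Nt C u x y z w = - Nt C u y x z w := by
  unfold Nt Gt
  linear_combination hC.2.1 (Pj u x) (Pj u y) (Pj u z) (Pj u w)

lemma Nt_a2 (hC : IsGenCurv C) (x y z w : Fin 4 → ℝ) :
    Nt C u x y z w = - Nt C u x y w z := by
  unfold Nt Gt
  linear_combination hC.2.2.1 (Pj u x) (Pj u y) (Pj u z) (Pj u w)

lemma Gt_ps (hC : IsGenCurv C) (x y z w : Fin 4 → ℝ) :
    Gt C u z w x y = Gt C u x y z w := by
  unfold Gt
  rw [hm_symm u z y, hm_symm u z x, hm_symm u w x, hm_symm u w y,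
    E_symm hC w x, E_symm hC w y, E_symm hC z y, E_symm hC z x]
  ring

lemma Nt_ps (hC : IsGenCurv C) (x y z w : Fin 4 → ℝ) :
    Nt C u x y z w = Nt C u z w x y := by
  unfold Nt
  rw [hC.2.2.2.1 (Pj u x) (Pj u y) (Pj u z) (Pj u w), Gt_ps hC]

lemma NtLin1 (hC : IsGenCurv C) (y z w : Fin 4 → ℝ) :
    IsLinearMap ℝ (fun x => Nt C u x y z w) := by
  constructor
  · intro a b
    unfold Nt Gt
    rw [Pj_add, Cadd1 hC, hm_add_left, hm_add_left, Eadd1 hC, Eadd1 hC]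
    ring
  · intro c a
    unfold Nt Gt
    rw [Pj_smul, Csmul1 hC, hm_smul_left, hm_smul_left, Esmul1 hC, Esmul1 hC]
    simp only [smul_eq_mul]; ring

lemma NtLin2 (hC : IsGenCurv C) (x z w : Fin 4 → ℝ) :
    IsLinearMap ℝ (fun y => Nt C u x y z w) := by
  constructor
  · intro a b
    unfold Nt Gt
    rw [Pj_add, Cadd2 hC, hm_add_left, hm_add_left, Eadd1 hC, Eadd1 hC]
    ring
  · intro c a
    unfold Nt Gt
    rw [Pj_smul, Csmul2 hC, hm_smul_left, hm_smul_left, Esmul1 hC, Esmul1 hC]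
    simp only [smul_eq_mul]; ring

lemma NtLin3 (hC : IsGenCurv C) (x y w : Fin 4 → ℝ) :
    IsLinearMap ℝ (fun z => Nt C u x y z w) := by
  constructor
  · intro a b
    unfold Nt Gt
    rw [Pj_add, Cadd3 hC, hm_add_right, hm_add_right, Eadd2 hC, Eadd2 hC]
    ring
  · intro c a
    unfold Nt Gt
    rw [Pj_smul, Csmul3 hC, hm_smul_right, hm_smul_right, Esmul2 hC, Esmul2 hC]
    simp only [smul_eq_mul]; ring

lemma NtLin4 (hC : IsGenCurv C) (x y z : Fin 4 → ℝ) :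
    IsLinearMap ℝ (fun w => Nt C u x y z w) := by
  constructor
  · intro a b
    unfold Nt Gt
    rw [Pj_add, Cadd4 hC, hm_add_right, hm_add_right, Eadd2 hC, Eadd2 hC]
    ring
  · intro c a
    unfold Nt Gt
    rw [Pj_smul, Csmul4 hC, hm_smul_right, hm_smul_right, Esmul2 hC, Esmul2 hC]
    simp only [smul_eq_mul]; ring

lemma Nt_Pj1 (hC : IsGenCurv C) (hu : ηf u u = -1) (x y z w : Fin 4 → ℝ) :
    Nt C u (Pj u x) y z w = Nt C u x y z w := by
  unfold Nt Gt
  rw [Pj_idem u x hu, hm_Pj_left u x w hu, hm_Pj_left u x z hu,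
    E_Pj_left hC x w, E_Pj_left hC x z]

lemma Nt_Pj2 (hC : IsGenCurv C) (hu : ηf u u = -1) (x y z w : Fin 4 → ℝ) :
    Nt C u x (Pj u y) z w = Nt C u x y z w := by
  unfold Nt Gt
  rw [Pj_idem u y hu, hm_Pj_left u y z hu, hm_Pj_left u y w hu,
    E_Pj_left hC y z, E_Pj_left hC y w]

lemma Nt_Pj3 (hC : IsGenCurv C) (hu : ηf u u = -1) (x y z w : Fin 4 → ℝ) :
    Nt C u x y (Pj u z) w = Nt C u x y z w := by
  unfold Nt Gt
  rw [Pj_idem u z hu, hm_Pj_right u x z hu, hm_Pj_right u y z hu,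
    E_Pj_right hC y z, E_Pj_right hC x z]

lemma Nt_Pj4 (hC : IsGenCurv C) (hu : ηf u u = -1) (x y z w : Fin 4 → ℝ) :
    Nt C u x y z (Pj u w) = Nt C u x y z w := by
  unfold Nt Gt
  rw [Pj_idem u w hu, hm_Pj_right u x w hu, hm_Pj_right u y w hu,
    E_Pj_right hC y w, E_Pj_right hC x w]

/- N is traceless -/
lemma rhoN (hC : IsGenCurv C) (htr : TotallyTraceless C) (hu : ηf u u = -1)
    (x y : Fin 4 → ℝ) :
    ∑ a : Fin 4, eps a * Nt C u (stdb a) x (stdb a) y = 0 := by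
  have step : ∀ a : Fin 4, eps a * Nt C u (stdb a) x (stdb a) y
      = eps a * C (Pj u (stdb a)) (Pj u x) (Pj u (stdb a)) (Pj u y)
        - (eps a * ηf (Pj u y) (stdb a) * electric C u x (stdb a)
          - (eps a * hm u (stdb a) (stdb a)) * electric C u x y
          + eps a * ηf (Pj u x) (stdb a) * electric C u (stdb a) y
          - (eps a * electric C u (stdb a) (stdb a)) * hm u x y) := by
    intro a
    unfold Nt Gt
    rw [hm_stdb u y a, hm_symm u x (stdb a), hm_stdb u x a]
    ring
  rw [Finset.sum_congr rfl fun a _ => step a, Finset.sum_sub_distrib]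
  rw [ricC hC htr hu (Pj u x) (Pj u y)]
  rw [Finset.sum_sub_distrib, Finset.sum_add_distrib, Finset.sum_sub_distrib]
  rw [raise (E_lin_right hC x) (Pj u y)]
  rw [raise (E_lin_left hC y) (Pj u x)]
  rw [← Finset.sum_mul, trhm hu]
  rw [← Finset.sum_mul, trE hC htr]
  simp only [E_Pj_left hC, E_Pj_right hC]
  ring

end withC4

/- ===== the u-adapted spatial cross product ===== -/

def crs (u a b : Fin 4 → ℝ) : Fin 4 → ℝ := fun i =>
  if i = 0 then
    -(u 3 * a 2 * b 1) + u 3 * a 1 * b 2 + u 2 * a 3 * b 1 - u 2 * a 1 * b 3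
      - u 1 * a 3 * b 2 + u 1 * a 2 * b 3
  else if i = 1 then
    -(u 3 * a 2 * b 0) + u 3 * a 0 * b 2 + u 2 * a 3 * b 0 - u 2 * a 0 * b 3
      - u 0 * a 3 * b 2 + u 0 * a 2 * b 3
  else if i = 2 then
    u 3 * a 1 * b 0 - u 3 * a 0 * b 1 - u 1 * a 3 * b 0 + u 1 * a 0 * b 3
      + u 0 * a 3 * b 1 - u 0 * a 1 * b 3
  else
    -(u 2 * a 1 * b 0) + u 2 * a 0 * b 1 + u 1 * a 2 * b 0 - u 1 * a 0 * b 2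
      - u 0 * a 2 * b 1 + u 0 * a 1 * b 2

lemma crs_app0 (u a b : Fin 4 → ℝ) : crs u a b 0 =
    -(u 3 * a 2 * b 1) + u 3 * a 1 * b 2 + u 2 * a 3 * b 1 - u 2 * a 1 * b 3
      - u 1 * a 3 * b 2 + u 1 * a 2 * b 3 := by simp [crs]

lemma crs_app1 (u a b : Fin 4 → ℝ) : crs u a b 1 =
    -(u 3 * a 2 * b 0) + u 3 * a 0 * b 2 + u 2 * a 3 * b 0 - u 2 * a 0 * b 3
      - u 0 * a 3 * b 2 + u 0 * a 2 * b 3 := by simp [crs]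

lemma crs_app2 (u a b : Fin 4 → ℝ) : crs u a b 2 =
    u 3 * a 1 * b 0 - u 3 * a 0 * b 1 - u 1 * a 3 * b 0 + u 1 * a 0 * b 3
      + u 0 * a 3 * b 1 - u 0 * a 1 * b 3 := by simp [crs]

lemma crs_app3 (u a b : Fin 4 → ℝ) : crs u a b 3 =
    -(u 2 * a 1 * b 0) + u 2 * a 0 * b 1 + u 1 * a 2 * b 0 - u 1 * a 0 * b 2
      - u 0 * a 2 * b 1 + u 0 * a 1 * b 2 := by simp [crs]

lemma ucrs (u a b : Fin 4 → ℝ) : ηf u (crs u a b) = 0 := by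
  rw [etaf_ex, crs_app0, crs_app1, crs_app2, crs_app3]; ring

lemma crs_swap (u a b s : Fin 4 → ℝ) : ηf (crs u a b) s = ηf (crs u b s) a := by
  rw [etaf_ex, etaf_ex, crs_app0, crs_app1, crs_app2, crs_app3,
    crs_app0, crs_app1, crs_app2, crs_app3]
  ring

/-- The Lagrange identity for the spatial cross product. -/
lemma crsL (u : Fin 4 → ℝ) (hu : ηf u u = -1) (a b c d : Fin 4 → ℝ) :
    ηf (crs u a b) (crs u c d) = hm u a c * hm u b d - hm u a d * hm u b c := by
  have hu' : -(u 0 * u 0) + u 1 * u 1 + u 2 * u 2 + u 3 * u 3 = -1 := by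
    rw [← etaf_ex]; exact hu
  simp only [hm, etaf_ex, crs_app0, crs_app1, crs_app2, crs_app3]
  linear_combination ((-1)*a 3*b 2*c 3*d 2 + 1*a 3*b 2*c 2*d 3 + (-1)*a 3*b 1*c 3*d 1 + 1*a 3*b 1*c 1*d 3 + 1*a 3*b 0*c 3*d 0 + (-1)*a 3*b 0*c 0*d 3 + 1*a 2*b 3*c 3*d 2 + (-1)*a 2*b 3*c 2*d 3 + (-1)*a 2*b 1*c 2*d 1 + 1*a 2*b 1*c 1*d 2 + 1*a 2*b 0*c 2*d 0 + (-1)*a 2*b 0*c 0*d 2 + 1*a 1*b 3*c 3*d 1 + (-1)*a 1*b 3*c 1*d 3 + 1*a 1*b 2*c 2*d 1 + (-1)*a 1*b 2*c 1*d 2 + 1*a 1*b 0*c 1*d 0 + (-1)*a 1*b 0*c 0*d 1 + (-1)*a 0*b 3*c 3*d 0 + 1*a 0*b 3*c 0*d 3 + (-1)*a 0*b 2*c 2*d 0 + 1*a 0*b 2*c 0*d 2 + (-1)*a 0*b 1*c 1*d 0 + 1*a 0*b 1*c 0*d 1) * hu'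

section bigmachine

variable {C : Tensor4 4} {u : Fin 4 → ℝ}

/- collapses: raising one slot of N -/
lemma collapse1 (hC : IsGenCurv C) (hu : ηf u u = -1) (v y z w : Fin 4 → ℝ) :
    ∑ c : Fin 4, eps c * hm u (stdb c) v * Nt C u (stdb c) y z w = Nt C u v y z w := by
  rw [Finset.sum_congr rfl fun c _ => by rw [hm_stdb u v c],
    raise (NtLin1 hC y z w) (Pj u v), Nt_Pj1 hC hu]

lemma collapse2 (hC : IsGenCurv C) (hu : ηf u u = -1) (x v z w : Fin 4 → ℝ) :
    ∑ c : Fin 4, eps c * hm u (stdb c) v * Nt C u x (stdb c) z w = Nt C u x v z w := by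
  rw [Finset.sum_congr rfl fun c _ => by rw [hm_stdb u v c],
    raise (NtLin2 hC x z w) (Pj u v), Nt_Pj2 hC hu]

lemma collapse3 (hC : IsGenCurv C) (hu : ηf u u = -1) (x y v w : Fin 4 → ℝ) :
    ∑ c : Fin 4, eps c * hm u (stdb c) v * Nt C u x y (stdb c) w = Nt C u x y v w := by
  rw [Finset.sum_congr rfl fun c _ => by rw [hm_stdb u v c],
    raise (NtLin3 hC x y w) (Pj u v), Nt_Pj3 hC hu]

lemma collapse4 (hC : IsGenCurv C) (hu : ηf u u = -1) (x y z v : Fin 4 → ℝ) :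
    ∑ c : Fin 4, eps c * hm u (stdb c) v * Nt C u x y z (stdb c) = Nt C u x y z v := by
  rw [Finset.sum_congr rfl fun c _ => by rw [hm_stdb u v c],
    raise (NtLin4 hC x y z) (Pj u v), Nt_Pj4 hC hu]

/- double raisings -/
lemma dbl12 (hC : IsGenCurv C) (hu : ηf u u = -1) (x y a b : Fin 4 → ℝ) :
    Nt C u x y a b
      = ∑ c : Fin 4, ∑ d : Fin 4,
          eps c * eps d * hm u (stdb c) x * hm u (stdb d) y
            * Nt C u (stdb c) (stdb d) a b := by
  calc Nt C u x y a b
      = ∑ c : Fin 4, eps c * hm u (stdb c) x * Nt C u (stdb c) y a b :=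
        (collapse1 hC hu x y a b).symm
    _ = ∑ c : Fin 4, eps c * hm u (stdb c) x
          * (∑ d : Fin 4, eps d * hm u (stdb d) y * Nt C u (stdb c) (stdb d) a b) := by
        refine Finset.sum_congr rfl fun c _ => ?_
        rw [collapse2 hC hu (stdb c) y a b]
    _ = ∑ c : Fin 4, ∑ d : Fin 4,
          eps c * eps d * hm u (stdb c) x * hm u (stdb d) y
            * Nt C u (stdb c) (stdb d) a b := by
        refine Finset.sum_congr rfl fun c _ => ?_
        rw [Finset.mul_sum]
        exact Finset.sum_congr rfl fun d _ => by ring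

lemma dbl34 (hC : IsGenCurv C) (hu : ηf u u = -1) (a b z w : Fin 4 → ℝ) :
    Nt C u a b z w
      = ∑ g : Fin 4, ∑ h : Fin 4,
          eps g * eps h * hm u (stdb g) z * hm u (stdb h) w
            * Nt C u a b (stdb g) (stdb h) := by
  calc Nt C u a b z w
      = ∑ g : Fin 4, eps g * hm u (stdb g) z * Nt C u a b (stdb g) w :=
        (collapse3 hC hu a b z w).symm
    _ = ∑ g : Fin 4, eps g * hm u (stdb g) z
          * (∑ h : Fin 4, eps h * hm u (stdb h) w * Nt C u a b (stdb g) (stdb h)) := by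
        refine Finset.sum_congr rfl fun g _ => ?_
        rw [collapse4 hC hu a b (stdb g) w]
    _ = ∑ g : Fin 4, ∑ h : Fin 4,
          eps g * eps h * hm u (stdb g) z * hm u (stdb h) w
            * Nt C u a b (stdb g) (stdb h) := by
        refine Finset.sum_congr rfl fun g _ => ?_
        rw [Finset.mul_sum]
        exact Finset.sum_congr rfl fun h _ => by ring

/- antisymmetrization / Lagrange conversion of a contracted pair -/
lemma pairconv (hu : ηf u u = -1) (z w : Fin 4 → ℝ) (A : Fin 4 → Fin 4 → ℝ)
    (hA : ∀ i j, A i j = - A j i) :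
    (∑ i : Fin 4, ∑ j : Fin 4,
        eps i * eps j * hm u (stdb i) z * hm u (stdb j) w * A i j)
      = (1/2) * ∑ i : Fin 4, ∑ j : Fin 4,
          eps i * eps j * ηf (crs u (stdb i) (stdb j)) (crs u z w) * A i j := by
  have hswap : (∑ i : Fin 4, ∑ j : Fin 4,
        eps i * eps j * hm u (stdb i) w * hm u (stdb j) z * A i j)
      = - ∑ i : Fin 4, ∑ j : Fin 4,
          eps i * eps j * hm u (stdb i) z * hm u (stdb j) w * A i j := by
    rw [Finset.sum_comm, ← Finset.sum_neg_distrib]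
    refine Finset.sum_congr rfl fun i _ => ?_
    rw [← Finset.sum_neg_distrib]
    refine Finset.sum_congr rfl fun j _ => ?_
    rw [hA j i]; ring
  have hK : (∑ i : Fin 4, ∑ j : Fin 4,
        eps i * eps j * ηf (crs u (stdb i) (stdb j)) (crs u z w) * A i j)
      = (∑ i : Fin 4, ∑ j : Fin 4,
          eps i * eps j * hm u (stdb i) z * hm u (stdb j) w * A i j)
        - (∑ i : Fin 4, ∑ j : Fin 4,
            eps i * eps j * hm u (stdb i) w * hm u (stdb j) z * A i j) := by
    rw [← Finset.sum_sub_distrib]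
    refine Finset.sum_congr rfl fun i _ => ?_
    rw [← Finset.sum_sub_distrib]
    refine Finset.sum_congr rfl fun j _ => ?_
    rw [crsL u hu]; ring
  rw [hK, hswap]; ring

end bigmachine

def Ph (C : Tensor4 4) (u p q : Fin 4 → ℝ) : ℝ :=
  (1/4) * ∑ c : Fin 4, ∑ d : Fin 4, ∑ g : Fin 4, ∑ h : Fin 4,
    eps c * eps d * eps g * eps h
      * ηf (crs u (stdb c) (stdb d)) p * ηf (crs u (stdb g) (stdb h)) q
      * Nt C u (stdb c) (stdb d) (stdb g) (stdb h)

lemma hm_crs_left (u a b w : Fin 4 → ℝ) : hm u (crs u a b) w = ηf (crs u a b) w := by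
  unfold hm; rw [ucrs]; ring

lemma hm_crs_right (u v a b : Fin 4 → ℝ) : hm u v (crs u a b) = ηf v (crs u a b) := by
  unfold hm; rw [ucrs]; ring

section machinetwo

variable {C : Tensor4 4} {u : Fin 4 → ℝ}

lemma I1 (hC : IsGenCurv C) (hu : ηf u u = -1) (x y z w : Fin 4 → ℝ) :
    Nt C u x y z w = Ph C u (crs u x y) (crs u z w) := by
  have step_cd : ∀ c d : Fin 4, Nt C u (stdb c) (stdb d) z w
      = (1/2) * ∑ g : Fin 4, ∑ h : Fin 4,
          eps g * eps h * ηf (crs u (stdb g) (stdb h)) (crs u z w)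
            * Nt C u (stdb c) (stdb d) (stdb g) (stdb h) := by
    intro c d
    exact (dbl34 hC hu (stdb c) (stdb d) z w).trans
      (pairconv hu z w (fun i j => Nt C u (stdb c) (stdb d) (stdb i) (stdb j))
        (fun i j => Nt_a2 hC (stdb c) (stdb d) (stdb i) (stdb j)))
  have hA' : ∀ i j : Fin 4,
      (∑ g : Fin 4, ∑ h : Fin 4,
        eps g * eps h * ηf (crs u (stdb g) (stdb h)) (crs u z w)
          * Nt C u (stdb i) (stdb j) (stdb g) (stdb h))
      = - (∑ g : Fin 4, ∑ h : Fin 4,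
        eps g * eps h * ηf (crs u (stdb g) (stdb h)) (crs u z w)
          * Nt C u (stdb j) (stdb i) (stdb g) (stdb h)) := by
    intro i j
    rw [← Finset.sum_neg_distrib]
    refine Finset.sum_congr rfl fun g _ => ?_
    rw [← Finset.sum_neg_distrib]
    refine Finset.sum_congr rfl fun h _ => ?_
    rw [Nt_a1 hC (stdb i) (stdb j) (stdb g) (stdb h)]; ring
  calc Nt C u x y z w
      = ∑ c : Fin 4, ∑ d : Fin 4,
          eps c * eps d * hm u (stdb c) x * hm u (stdb d) y
            * Nt C u (stdb c) (stdb d) z w := dbl12 hC hu x y z w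
    _ = ∑ c : Fin 4, ∑ d : Fin 4,
          eps c * eps d * hm u (stdb c) x * hm u (stdb d) y
            * ((1/2) * ∑ g : Fin 4, ∑ h : Fin 4,
                eps g * eps h * ηf (crs u (stdb g) (stdb h)) (crs u z w)
                  * Nt C u (stdb c) (stdb d) (stdb g) (stdb h)) := by
        refine Finset.sum_congr rfl fun c _ => Finset.sum_congr rfl fun d _ => ?_
        rw [step_cd c d]
    _ = (1/2) * ∑ c : Fin 4, ∑ d : Fin 4,
          eps c * eps d * hm u (stdb c) x * hm u (stdb d) y
            * (∑ g : Fin 4, ∑ h : Fin 4,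
                eps g * eps h * ηf (crs u (stdb g) (stdb h)) (crs u z w)
                  * Nt C u (stdb c) (stdb d) (stdb g) (stdb h)) := by
        rw [Finset.mul_sum]
        refine Finset.sum_congr rfl fun c _ => ?_
        rw [Finset.mul_sum]
        exact Finset.sum_congr rfl fun d _ => by ring
    _ = (1/2) * ((1/2) * ∑ c : Fin 4, ∑ d : Fin 4,
          eps c * eps d * ηf (crs u (stdb c) (stdb d)) (crs u x y)
            * (∑ g : Fin 4, ∑ h : Fin 4,
                eps g * eps h * ηf (crs u (stdb g) (stdb h)) (crs u z w)
                  * Nt C u (stdb c) (stdb d) (stdb g) (stdb h))) := by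
        exact congrArg (fun t => (1/2 : ℝ) * t)
          (pairconv hu x y
            (fun i j => ∑ g : Fin 4, ∑ h : Fin 4,
              eps g * eps h * ηf (crs u (stdb g) (stdb h)) (crs u z w)
                * Nt C u (stdb i) (stdb j) (stdb g) (stdb h)) hA')
    _ = Ph C u (crs u x y) (crs u z w) := by
        unfold Ph
        have hS : (∑ c : Fin 4, ∑ d : Fin 4,
            eps c * eps d * ηf (crs u (stdb c) (stdb d)) (crs u x y)
              * (∑ g : Fin 4, ∑ h : Fin 4,
                  eps g * eps h * ηf (crs u (stdb g) (stdb h)) (crs u z w)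
                    * Nt C u (stdb c) (stdb d) (stdb g) (stdb h)))
            = ∑ c : Fin 4, ∑ d : Fin 4, ∑ g : Fin 4, ∑ h : Fin 4,
                eps c * eps d * eps g * eps h
                  * ηf (crs u (stdb c) (stdb d)) (crs u x y)
                  * ηf (crs u (stdb g) (stdb h)) (crs u z w)
                  * Nt C u (stdb c) (stdb d) (stdb g) (stdb h) := by
          refine Finset.sum_congr rfl fun c _ => Finset.sum_congr rfl fun d _ => ?_
          rw [Finset.mul_sum]
          refine Finset.sum_congr rfl fun g _ => ?_
          rw [Finset.mul_sum]
          exact Finset.sum_congr rfl fun h _ => by ring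
        rw [hS]; ring

lemma T0zero (hC : IsGenCurv C) (htr : TotallyTraceless C) (hu : ηf u u = -1) :
    (∑ c : Fin 4, ∑ d : Fin 4, ∑ g : Fin 4, ∑ h : Fin 4,
      eps c * eps d * eps g * eps h
        * ηf (crs u (stdb c) (stdb d)) (crs u (stdb g) (stdb h))
        * Nt C u (stdb c) (stdb d) (stdb g) (stdb h)) = 0 := by
  have inner1 : ∀ c d : Fin 4,
      (∑ g : Fin 4, ∑ h : Fin 4,
        eps g * eps h * hm u (stdb g) (stdb c) * hm u (stdb h) (stdb d)
          * Nt C u (stdb c) (stdb d) (stdb g) (stdb h))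
      = Nt C u (stdb c) (stdb d) (stdb c) (stdb d) :=
    fun c d => (dbl34 hC hu (stdb c) (stdb d) (stdb c) (stdb d)).symm
  have inner2 : ∀ c d : Fin 4,
      (∑ g : Fin 4, ∑ h : Fin 4,
        eps g * eps h * hm u (stdb g) (stdb d) * hm u (stdb h) (stdb c)
          * Nt C u (stdb c) (stdb d) (stdb g) (stdb h))
      = Nt C u (stdb c) (stdb d) (stdb d) (stdb c) :=
    fun c d => (dbl34 hC hu (stdb c) (stdb d) (stdb d) (stdb c)).symm
  calc (∑ c : Fin 4, ∑ d : Fin 4, ∑ g : Fin 4, ∑ h : Fin 4,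
      eps c * eps d * eps g * eps h
        * ηf (crs u (stdb c) (stdb d)) (crs u (stdb g) (stdb h))
        * Nt C u (stdb c) (stdb d) (stdb g) (stdb h))
      = ∑ c : Fin 4, ∑ d : Fin 4,
          (eps c * eps d
            * ((∑ g : Fin 4, ∑ h : Fin 4,
                eps g * eps h * hm u (stdb g) (stdb c) * hm u (stdb h) (stdb d)
                  * Nt C u (stdb c) (stdb d) (stdb g) (stdb h))
              - (∑ g : Fin 4, ∑ h : Fin 4,
                eps g * eps h * hm u (stdb g) (stdb d) * hm u (stdb h) (stdb c)
                  * Nt C u (stdb c) (stdb d) (stdb g) (stdb h)))) := by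
        refine Finset.sum_congr rfl fun c _ => Finset.sum_congr rfl fun d _ => ?_
        rw [mul_sub, Finset.mul_sum, Finset.mul_sum, ← Finset.sum_sub_distrib]
        refine Finset.sum_congr rfl fun g _ => ?_
        rw [Finset.mul_sum, Finset.mul_sum, ← Finset.sum_sub_distrib]
        refine Finset.sum_congr rfl fun h _ => ?_
        rw [crsL u hu, hm_symm u (stdb c) (stdb g), hm_symm u (stdb d) (stdb h),
          hm_symm u (stdb c) (stdb h), hm_symm u (stdb d) (stdb g)]
        ring
    _ = ∑ c : Fin 4, ∑ d : Fin 4,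
          (eps c * eps d
            * (Nt C u (stdb c) (stdb d) (stdb c) (stdb d)
              - Nt C u (stdb c) (stdb d) (stdb d) (stdb c))) := by
        refine Finset.sum_congr rfl fun c _ => Finset.sum_congr rfl fun d _ => ?_
        rw [inner1 c d, inner2 c d]
    _ = ∑ c : Fin 4, (2 * eps c)
          * ∑ d : Fin 4, eps d * Nt C u (stdb d) (stdb c) (stdb d) (stdb c) := by
        refine Finset.sum_congr rfl fun c _ => ?_
        rw [Finset.mul_sum]
        refine Finset.sum_congr rfl fun d _ => ?_
        have h1 : Nt C u (stdb c) (stdb d) (stdb d) (stdb c)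
            = - Nt C u (stdb c) (stdb d) (stdb c) (stdb d) :=
          Nt_a2 hC (stdb c) (stdb d) (stdb d) (stdb c)
        have h2 : Nt C u (stdb c) (stdb d) (stdb c) (stdb d)
            = Nt C u (stdb d) (stdb c) (stdb d) (stdb c) := by
          rw [Nt_a1 hC, Nt_a2 hC (stdb d) (stdb c) (stdb c) (stdb d)]; ring
        rw [h1, h2]; ring
    _ = 0 := by
        refine Finset.sum_eq_zero fun c _ => ?_
        rw [rhoN hC htr hu (stdb c) (stdb c), mul_zero]

lemma VsSum (u : Fin 4 → ℝ) (s t x y : Fin 4 → ℝ) :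
    ∑ a : Fin 4, eps a * (ηf s (crs u (stdb a) x) * ηf t (crs u (stdb a) y))
      = ηf (crs u y t) (crs u x s) := by
  refine Eq.trans (Finset.sum_congr rfl fun a _ => ?_)
    (raise (etaf_lin (crs u y t)) (crs u x s))
  rw [etaf_symm s (crs u (stdb a) x), crs_swap u (stdb a) x s,
      etaf_symm t (crs u (stdb a) y), crs_swap u (stdb a) y t]
  ring

end machinetwo

section machinethree

variable {C : Tensor4 4} {u : Fin 4 → ℝ}

lemma Phvanish (hC : IsGenCurv C) (htr : TotallyTraceless C) (hu : ηf u u = -1)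
    (x y : Fin 4 → ℝ) : Ph C u y x = 0 := by
  -- abbreviations are written out in full below
  have inner : ∀ c d g h : Fin 4,
      (∑ a : Fin 4, eps a
        * (eps c * eps d * eps g * eps h
            * ηf (crs u (stdb c) (stdb d)) (crs u (stdb a) x)
            * ηf (crs u (stdb g) (stdb h)) (crs u (stdb a) y)
            * Nt C u (stdb c) (stdb d) (stdb g) (stdb h)))
      = eps c * eps d * eps g * eps h
          * ηf (crs u y (crs u (stdb g) (stdb h))) (crs u x (crs u (stdb c) (stdb d)))
          * Nt C u (stdb c) (stdb d) (stdb g) (stdb h) := by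
    intro c d g h
    have hpt : ∀ a : Fin 4, eps a
        * (eps c * eps d * eps g * eps h
            * ηf (crs u (stdb c) (stdb d)) (crs u (stdb a) x)
            * ηf (crs u (stdb g) (stdb h)) (crs u (stdb a) y)
            * Nt C u (stdb c) (stdb d) (stdb g) (stdb h))
        = (eps c * eps d * eps g * eps h * Nt C u (stdb c) (stdb d) (stdb g) (stdb h))
            * (eps a * (ηf (crs u (stdb c) (stdb d)) (crs u (stdb a) x)
                * ηf (crs u (stdb g) (stdb h)) (crs u (stdb a) y))) := by
      intro a; ring
    rw [Finset.sum_congr rfl fun a _ => hpt a, ← Finset.mul_sum,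
      VsSum u (crs u (stdb c) (stdb d)) (crs u (stdb g) (stdb h)) x y]
    ring
  have key : (∑ a : Fin 4, eps a * Ph C u (crs u (stdb a) x) (crs u (stdb a) y))
      = (1/4) * ∑ c : Fin 4, ∑ d : Fin 4, ∑ g : Fin 4, ∑ h : Fin 4,
          eps c * eps d * eps g * eps h
            * ηf (crs u y (crs u (stdb g) (stdb h))) (crs u x (crs u (stdb c) (stdb d)))
            * Nt C u (stdb c) (stdb d) (stdb g) (stdb h) := by
    have push : ∀ a : Fin 4, eps a * Ph C u (crs u (stdb a) x) (crs u (stdb a) y)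
        = (1/4) * ∑ c : Fin 4, ∑ d : Fin 4, ∑ g : Fin 4, ∑ h : Fin 4,
            eps a * (eps c * eps d * eps g * eps h
              * ηf (crs u (stdb c) (stdb d)) (crs u (stdb a) x)
              * ηf (crs u (stdb g) (stdb h)) (crs u (stdb a) y)
              * Nt C u (stdb c) (stdb d) (stdb g) (stdb h)) := by
      intro a
      unfold Ph
      rw [show ∀ s : ℝ, eps a * ((1/4) * s) = (1/4) * (eps a * s) from fun s => by ring]
      congr 1
      rw [Finset.mul_sum]
      refine Finset.sum_congr rfl fun c _ => ?_
      rw [Finset.mul_sum]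
      refine Finset.sum_congr rfl fun d _ => ?_
      rw [Finset.mul_sum]
      refine Finset.sum_congr rfl fun g _ => ?_
      rw [Finset.mul_sum]
    calc (∑ a : Fin 4, eps a * Ph C u (crs u (stdb a) x) (crs u (stdb a) y))
        = ∑ a : Fin 4, (1/4) * ∑ c : Fin 4, ∑ d : Fin 4, ∑ g : Fin 4, ∑ h : Fin 4,
            eps a * (eps c * eps d * eps g * eps h
              * ηf (crs u (stdb c) (stdb d)) (crs u (stdb a) x)
              * ηf (crs u (stdb g) (stdb h)) (crs u (stdb a) y)
              * Nt C u (stdb c) (stdb d) (stdb g) (stdb h)) :=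
          Finset.sum_congr rfl fun a _ => push a
      _ = (1/4) * ∑ a : Fin 4, ∑ c : Fin 4, ∑ d : Fin 4, ∑ g : Fin 4, ∑ h : Fin 4,
            eps a * (eps c * eps d * eps g * eps h
              * ηf (crs u (stdb c) (stdb d)) (crs u (stdb a) x)
              * ηf (crs u (stdb g) (stdb h)) (crs u (stdb a) y)
              * Nt C u (stdb c) (stdb d) (stdb g) (stdb h)) := by
          rw [← Finset.mul_sum]
      _ = (1/4) * ∑ c : Fin 4, ∑ a : Fin 4, ∑ d : Fin 4, ∑ g : Fin 4, ∑ h : Fin 4,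
            eps a * (eps c * eps d * eps g * eps h
              * ηf (crs u (stdb c) (stdb d)) (crs u (stdb a) x)
              * ηf (crs u (stdb g) (stdb h)) (crs u (stdb a) y)
              * Nt C u (stdb c) (stdb d) (stdb g) (stdb h)) := by
          rw [Finset.sum_comm]
      _ = (1/4) * ∑ c : Fin 4, ∑ d : Fin 4, ∑ a : Fin 4, ∑ g : Fin 4, ∑ h : Fin 4,
            eps a * (eps c * eps d * eps g * eps h
              * ηf (crs u (stdb c) (stdb d)) (crs u (stdb a) x)
              * ηf (crs u (stdb g) (stdb h)) (crs u (stdb a) y)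
              * Nt C u (stdb c) (stdb d) (stdb g) (stdb h)) := by
          exact congrArg (fun t => (1/4 : ℝ) * t)
            (Finset.sum_congr rfl fun c _ => Finset.sum_comm)
      _ = (1/4) * ∑ c : Fin 4, ∑ d : Fin 4, ∑ g : Fin 4, ∑ a : Fin 4, ∑ h : Fin 4,
            eps a * (eps c * eps d * eps g * eps h
              * ηf (crs u (stdb c) (stdb d)) (crs u (stdb a) x)
              * ηf (crs u (stdb g) (stdb h)) (crs u (stdb a) y)
              * Nt C u (stdb c) (stdb d) (stdb g) (stdb h)) := by
          exact congrArg (fun t => (1/4 : ℝ) * t)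
            (Finset.sum_congr rfl fun c _ => Finset.sum_congr rfl fun d _ =>
              Finset.sum_comm)
      _ = (1/4) * ∑ c : Fin 4, ∑ d : Fin 4, ∑ g : Fin 4, ∑ h : Fin 4, ∑ a : Fin 4,
            eps a * (eps c * eps d * eps g * eps h
              * ηf (crs u (stdb c) (stdb d)) (crs u (stdb a) x)
              * ηf (crs u (stdb g) (stdb h)) (crs u (stdb a) y)
              * Nt C u (stdb c) (stdb d) (stdb g) (stdb h)) := by
          exact congrArg (fun t => (1/4 : ℝ) * t)
            (Finset.sum_congr rfl fun c _ => Finset.sum_congr rfl fun d _ =>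
              Finset.sum_congr rfl fun g _ => Finset.sum_comm)
      _ = (1/4) * ∑ c : Fin 4, ∑ d : Fin 4, ∑ g : Fin 4, ∑ h : Fin 4,
            eps c * eps d * eps g * eps h
              * ηf (crs u y (crs u (stdb g) (stdb h))) (crs u x (crs u (stdb c) (stdb d)))
              * Nt C u (stdb c) (stdb d) (stdb g) (stdb h) := by
          exact congrArg (fun t => (1/4 : ℝ) * t)
            (Finset.sum_congr rfl fun c _ => Finset.sum_congr rfl fun d _ =>
              Finset.sum_congr rfl fun g _ => Finset.sum_congr rfl fun h _ =>
                inner c d g h)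
  -- split the evaluated sum via Lagrange
  have split : (∑ c : Fin 4, ∑ d : Fin 4, ∑ g : Fin 4, ∑ h : Fin 4,
      eps c * eps d * eps g * eps h
        * ηf (crs u y (crs u (stdb g) (stdb h))) (crs u x (crs u (stdb c) (stdb d)))
        * Nt C u (stdb c) (stdb d) (stdb g) (stdb h))
      = hm u y x * (∑ c : Fin 4, ∑ d : Fin 4, ∑ g : Fin 4, ∑ h : Fin 4,
          eps c * eps d * eps g * eps h
            * ηf (crs u (stdb g) (stdb h)) (crs u (stdb c) (stdb d))
            * Nt C u (stdb c) (stdb d) (stdb g) (stdb h))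
        - (∑ c : Fin 4, ∑ d : Fin 4, ∑ g : Fin 4, ∑ h : Fin 4,
            eps c * eps d * eps g * eps h
              * ηf y (crs u (stdb c) (stdb d)) * ηf (crs u (stdb g) (stdb h)) x
              * Nt C u (stdb c) (stdb d) (stdb g) (stdb h)) := by
    rw [Finset.mul_sum, ← Finset.sum_sub_distrib]
    refine Finset.sum_congr rfl fun c _ => ?_
    rw [Finset.mul_sum, ← Finset.sum_sub_distrib]
    refine Finset.sum_congr rfl fun d _ => ?_
    rw [Finset.mul_sum, ← Finset.sum_sub_distrib]
    refine Finset.sum_congr rfl fun g _ => ?_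
    rw [Finset.mul_sum, ← Finset.sum_sub_distrib]
    refine Finset.sum_congr rfl fun h _ => ?_
    rw [crsL u hu y (crs u (stdb g) (stdb h)) x (crs u (stdb c) (stdb d)),
      hm_crs_left, hm_crs_left, hm_crs_right]
    ring
  have hfirst : (∑ c : Fin 4, ∑ d : Fin 4, ∑ g : Fin 4, ∑ h : Fin 4,
      eps c * eps d * eps g * eps h
        * ηf (crs u (stdb g) (stdb h)) (crs u (stdb c) (stdb d))
        * Nt C u (stdb c) (stdb d) (stdb g) (stdb h)) = 0 := by
    rw [← T0zero hC htr hu]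
    refine Finset.sum_congr rfl fun c _ => Finset.sum_congr rfl fun d _ =>
      Finset.sum_congr rfl fun g _ => Finset.sum_congr rfl fun h _ => ?_
    rw [etaf_symm (crs u (stdb g) (stdb h)) (crs u (stdb c) (stdb d))]
  have hPh : Ph C u y x = (1/4) * (∑ c : Fin 4, ∑ d : Fin 4, ∑ g : Fin 4, ∑ h : Fin 4,
      eps c * eps d * eps g * eps h
        * ηf y (crs u (stdb c) (stdb d)) * ηf (crs u (stdb g) (stdb h)) x
        * Nt C u (stdb c) (stdb d) (stdb g) (stdb h)) := by
    unfold Ph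
    congr 1
    refine Finset.sum_congr rfl fun c _ => Finset.sum_congr rfl fun d _ =>
      Finset.sum_congr rfl fun g _ => Finset.sum_congr rfl fun h _ => ?_
    rw [etaf_symm (crs u (stdb c) (stdb d)) y]
  have h0 : (0:ℝ) = ∑ a : Fin 4, eps a * Ph C u (crs u (stdb a) x) (crs u (stdb a) y) := by
    rw [← rhoN hC htr hu x y]
    exact Finset.sum_congr rfl fun a _ => by rw [I1 hC hu]
  rw [key, split, hfirst] at h0
  rw [hPh]
  linarith

lemma lemB (hC : IsGenCurv C) (htr : TotallyTraceless C) (hu : ηf u u = -1)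
    (x y z w : Fin 4 → ℝ) :
    C (Pj u x) (Pj u y) (Pj u z) (Pj u w) = Gt C u x y z w := by
  have h := I1 hC hu x y z w
  rw [Phvanish hC htr hu (crs u z w) (crs u x y)] at h
  unfold Nt at h
  linarith

end machinethree
/-- a totally traceless generalized curvature tensor `C` on
Minkowski `ℝ^4`, Weyl compatible with a unit timelike `u`, is wholly determined
by its electric part `E`. -/
theorem stmt_5 (C : Tensor4 4) (hC : IsGenCurv C) (htr : TotallyTraceless C)
    (u : Fin 4 → ℝ) (hu : ηf u u = -1) (hW : WeylCompatible C u) :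
    ∀ x y z w,
      C x y z w
        = 2 * (ηf u x * ηf u w * electric C u y z
            - ηf u x * ηf u z * electric C u y w
            + ηf u y * ηf u z * electric C u x w
            - ηf u y * ηf u w * electric C u x z)
          + ηf x w * electric C u y z - ηf x z * electric C u y w
          + ηf y z * electric C u x w - ηf y w * electric C u x z := by
  intro x y z w
  have e1 : C x y z (Pj u w) = C x y z w + ηf u w * C x y z u := by
    rw [Pj_eq, Cadd4 hC, Csmul4 hC]
  have e2 : C x y (Pj u z) (Pj u w)
      = C x y z (Pj u w) + ηf u z * C x y u (Pj u w) := by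
    rw [Pj_eq u z, Cadd3 hC, Csmul3 hC]
  have e3 : C x (Pj u y) (Pj u z) (Pj u w)
      = C x y (Pj u z) (Pj u w) + ηf u y * C x u (Pj u z) (Pj u w) := by
    rw [Pj_eq u y, Cadd2 hC, Csmul2 hC]
  have e4 : C (Pj u x) (Pj u y) (Pj u z) (Pj u w)
      = C x (Pj u y) (Pj u z) (Pj u w) + ηf u x * C u (Pj u y) (Pj u z) (Pj u w) := by
    rw [Pj_eq u x, Cadd1 hC, Csmul1 hC]
  have ea : C x y z u = ηf u y * electric C u x z - ηf u x * electric C u y z :=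
    lemA hC hu hW x y z
  have eb : C x y u (Pj u w)
      = -(ηf u y * electric C u x w - ηf u x * electric C u y w) := by
    rw [hC.2.2.1 x y u (Pj u w), lemA hC hu hW x y (Pj u w),
      E_Pj_right hC, E_Pj_right hC]
  have ec : C x u (Pj u z) (Pj u w) = 0 := by
    rw [hC.2.2.2.1 x u (Pj u z) (Pj u w), lemA hC hu hW (Pj u z) (Pj u w) x,
      etaf_u_Pj u w hu, etaf_u_Pj u z hu]
    ring
  have ed : C u (Pj u y) (Pj u z) (Pj u w) = 0 := by
    rw [hC.2.2.2.1 u (Pj u y) (Pj u z) (Pj u w),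
      hC.2.2.1 (Pj u z) (Pj u w) u (Pj u y),
      lemA hC hu hW (Pj u z) (Pj u w) (Pj u y),
      etaf_u_Pj u w hu, etaf_u_Pj u z hu]
    ring
  have hB := lemB hC htr hu x y z w
  simp only [Gt, hm] at hB
  linear_combination hB - e4 - e3 - e2 - e1 - ηf u w * ea - ηf u z * eb
    - ηf u y * ec - ηf u x * ed
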